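/- Let ε > 0 and μ be real constants and let u, y, z : ℝ → ℝ be differentiable functions with u(t) < (1+μ)/2 for all t, satisfying the folded-node system ε·u̇ = (μ/2)y − (1+μ)z + 2zu, ẏ = 1, ż = u. Define w(t) = −(((1+μ)/2 − u(t))/ε)^ε (real power of a positive quantity), so that w(t) < 0. Then w is differentiable and (w, y, z) satisfies ẇ(t) = 2z(t)·w(t) + (μ·y(t)/(2ε))·|w(t)|^(1−1/ε), ẏ(t) = 1, ż(t) = −ε·|w(t)|^(1/ε) + (1+μ)/2 for all t. -/

import Mathlib

/-- The second microscope `w = ((u − (1+μ)/2)/ε)^[ε]` on the branch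
`u < (1+μ)/2`, where `w = −(((1+μ)/2 − u)/ε)^ε < 0`: if `(u,y,z)` solves the
folded-node system `εu̇ = (μ/2)y − (1+μ)z + 2zu`, `ẏ = 1`, `ż = u`, then `w` is
differentiable and `(w,y,z)` satisfies `ẇ = 2zw + (μy/(2ε))|w|^(1−1/ε)`,
`ẏ = 1`, `ż = −ε|w|^(1/ε) + (1+μ)/2`. -/
theorem second_microscope_system (ε μ : ℝ) (hε : 0 < ε) (u y z : ℝ → ℝ)
    (hu : Differentiable ℝ u) (hy : Differentiable ℝ y) (hz : Differentiable ℝ z)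
    (hub : ∀ t, u t < (1+μ)/2)
    (hdu : ∀ t, ε * deriv u t = μ/2 * y t - (1+μ) * z t + 2 * z t * u t)
    (hdy : ∀ t, deriv y t = 1)
    (hdz : ∀ t, deriv z t = u t)
    (w : ℝ → ℝ) (hw : ∀ t, w t = -((((1+μ)/2 - u t) / ε) ^ ε)) :
    Differentiable ℝ w ∧
    ∀ t, w t < 0 ∧
      deriv w t = 2 * z t * w t + (μ * y t / (2*ε)) * |w t| ^ (1 - 1/ε) ∧
      deriv y t = 1 ∧
      deriv z t = -ε * |w t| ^ (1/ε) + (1+μ)/2 := by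
  have hεne : ε ≠ 0 := hε.ne'
  have hv : ∀ t, 0 < ((1+μ)/2 - u t) / ε := fun t => div_pos (by linarith [hub t]) hε
  have hwfun : w = fun t => -((((1+μ)/2 - u t) / ε) ^ ε) := funext hw
  have hW : ∀ t, HasDerivAt w ((((1+μ)/2 - u t) / ε) ^ (ε - 1) * deriv u t) t := by
    intro t
    have h1 : HasDerivAt (fun s => ((1+μ)/2 - u s) / ε) (-deriv u t / ε) t := by
      simpa using ((hu t).hasDerivAt.const_sub ((1+μ)/2)).div_const ε
    have h2 : HasDerivAt (fun s => -((((1+μ)/2 - u s) / ε) ^ ε)) _ t :=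
      (h1.rpow_const (p := ε) (Or.inl (hv t).ne')).neg
    rw [hwfun]
    convert h2 using 1
    field_simp
  have habs : ∀ t, |w t| = (((1+μ)/2 - u t) / ε) ^ ε := by
    intro t
    rw [hw t, abs_neg, abs_of_pos (Real.rpow_pos_of_pos (hv t) ε)]
  refine ⟨fun t => (hW t).differentiableAt, fun t => ?_⟩
  have hvt := hv t
  refine ⟨by rw [hw t]; exact neg_neg_iff_pos.mpr (Real.rpow_pos_of_pos hvt ε), ?_, hdy t, ?_⟩
  · have hdu' : deriv u t = (μ/2 * y t - (1+μ) * z t + 2 * z t * u t) / ε :=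
      (eq_div_iff hεne).mpr (by linarith [hdu t])
    rw [(hW t).deriv, habs t, hw t, ← Real.rpow_mul hvt.le,
      show ε * (1 - 1/ε) = ε - 1 by field_simp,
      Real.rpow_sub hvt, Real.rpow_one, hdu']
    set v := ((1 + μ) / 2 - u t) / ε with hvdef
    have hvne : v ≠ 0 := hvt.ne'
    have hut : u t = (1 + μ) / 2 - ε * v := by rw [hvdef]; field_simp; ring
    rw [hut]
    field_simp
    ring
  · rw [habs t, ← Real.rpow_mul hvt.le, mul_one_div, div_self hεne, Real.rpow_one, hdz t]
    field_simp
    ring
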